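/- The rotation number of a regular closed curve in ℝ² is invariant under regular homotopy: if γ̄₀ and γ̄₁ are regularly homotopic regular closed curves, then rot(γ̄₀) = rot(γ̄₁). -/

import Mathlib

open Real

noncomputable section

/-- A regular closed curve in the plane: continuously differentiable,
`2π`-periodic, with nowhere vanishing derivative. -/
def IsRegularClosedCurve (γ : ℝ → ℝ × ℝ) : Prop :=
  ContDiff ℝ 1 γ ∧ (∀ s, γ (s + 2 * π) = γ s) ∧ ∀ s, deriv γ s ≠ 0

/-- `γ` has rotation number `n`: there is a continuous angle function `θ` for the
velocity vector with `θ (2π) - θ 0 = 2πn`. -/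
def HasRotationNumber (γ : ℝ → ℝ × ℝ) (n : ℤ) : Prop :=
  ∃ θ : ℝ → ℝ, Continuous θ ∧
    (∀ s, deriv γ s = ‖deriv γ s‖ • (Real.cos (θ s), Real.sin (θ s))) ∧
    θ (2 * π) - θ 0 = 2 * π * (n : ℝ)

/-- A regular homotopy: a family of regular closed curves, jointly continuous
in `(s, t)` together with its `s`-derivative, for `t ∈ [0,1]`. -/
def IsRegularHomotopy (Γ : ℝ → ℝ → ℝ × ℝ) : Prop :=
  (∀ t ∈ Set.Icc (0:ℝ) 1, IsRegularClosedCurve (Γ t)) ∧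
  ContinuousOn (fun p : ℝ × ℝ => Γ p.2 p.1) (Set.univ ×ˢ Set.Icc (0:ℝ) 1) ∧
  ContinuousOn (fun p : ℝ × ℝ => deriv (Γ p.2) p.1) (Set.univ ×ˢ Set.Icc (0:ℝ) 1)

def RegularlyHomotopic (γ₀ γ₁ : ℝ → ℝ × ℝ) : Prop :=
  ∃ Γ : ℝ → ℝ → ℝ × ℝ, IsRegularHomotopy Γ ∧ Γ 0 = γ₀ ∧ Γ 1 = γ₁

/-- The coordinate functions of a space curve `γ = (x, y, z) : ℝ → ℝ³`. -/
def curveX (γ : ℝ → ℝ × ℝ × ℝ) : ℝ → ℝ := fun s => (γ s).1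
def curveY (γ : ℝ → ℝ × ℝ × ℝ) : ℝ → ℝ := fun s => (γ s).2.1
def curveZ (γ : ℝ → ℝ × ℝ × ℝ) : ℝ → ℝ := fun s => (γ s).2.2

/-- The Legendrian condition `z' + x·y' ≡ 0` for the standard contact
structure `ξ = ker (dz + x dy)` on `ℝ³`. -/
def IsLegendrian (γ : ℝ → ℝ × ℝ × ℝ) : Prop :=
  ∀ s, deriv (curveZ γ) s + curveX γ s * deriv (curveY γ) s = 0

/-- A regular closed Legendrian curve in `(ℝ³, ξ)`. -/
def IsRegularClosedLegendrian (γ : ℝ → ℝ × ℝ × ℝ) : Prop :=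
  ContDiff ℝ 1 γ ∧ (∀ s, γ (s + 2 * π) = γ s) ∧ (∀ s, deriv γ s ≠ 0) ∧ IsLegendrian γ

/-- The Lagrangian projection `(x, y, z) ↦ (x, y)`. -/
def LagrangianProj (γ : ℝ → ℝ × ℝ × ℝ) : ℝ → ℝ × ℝ :=
  fun s => ((γ s).1, (γ s).2.1)

/-- The rotation number of a Legendrian curve, measured in the frame
`e₁ = ∂ₓ`, `e₂ = ∂_y - x ∂_z` of `ξ`, in which `γ'` has coefficients `(x', y')`. -/
def HasLegendrianRotationNumber (γ : ℝ → ℝ × ℝ × ℝ) (n : ℤ) : Prop :=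
  ∃ θ : ℝ → ℝ, Continuous θ ∧
    (∀ s, (deriv (curveX γ) s, deriv (curveY γ) s) =
      ‖(deriv (curveX γ) s, deriv (curveY γ) s)‖ • (Real.cos (θ s), Real.sin (θ s))) ∧
    θ (2 * π) - θ 0 = 2 * π * (n : ℝ)

/-- A Legendrian regular homotopy: a family of regular closed Legendrian
curves, jointly continuous in `(s,t)` together with its `s`-derivative. -/
def IsLegendrianRegularHomotopy (Γ : ℝ → ℝ → ℝ × ℝ × ℝ) : Prop :=
  (∀ t ∈ Set.Icc (0:ℝ) 1, IsRegularClosedLegendrian (Γ t)) ∧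
  ContinuousOn (fun p : ℝ × ℝ => Γ p.2 p.1) (Set.univ ×ˢ Set.Icc (0:ℝ) 1) ∧
  ContinuousOn (fun p : ℝ × ℝ => deriv (Γ p.2) p.1) (Set.univ ×ˢ Set.Icc (0:ℝ) 1)

def LegendrianRegularlyHomotopic (γ₀ γ₁ : ℝ → ℝ × ℝ × ℝ) : Prop :=
  ∃ Γ : ℝ → ℝ → ℝ × ℝ × ℝ, IsLegendrianRegularHomotopy Γ ∧ Γ 0 = γ₀ ∧ Γ 1 = γ₁

namespace RotAux

open Complex Set

noncomputable def vC (γ : ℝ → ℝ × ℝ) (s : ℝ) : ℂ :=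
  ((deriv γ s).1 : ℂ) + ((deriv γ s).2 : ℂ) * Complex.I

noncomputable def dirC (γ : ℝ → ℝ × ℝ) (s : ℝ) : ℂ :=
  vC γ s / (‖vC γ s‖ : ℂ)

lemma vC_ne_zero {γ : ℝ → ℝ × ℝ} {s : ℝ} (h : deriv γ s ≠ 0) : vC γ s ≠ 0 := by
  intro hz
  apply h
  have h1 : (vC γ s).re = 0 := by rw [hz]; simp
  have h2 : (vC γ s).im = 0 := by rw [hz]; simp
  simp only [vC, Complex.add_re, Complex.ofReal_re, Complex.mul_re, Complex.I_re,
    Complex.ofReal_im, Complex.I_im, Complex.add_im, Complex.mul_im] at h1 h2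
  have : deriv γ s = ((deriv γ s).1, (deriv γ s).2) := rfl
  rw [this, Prod.mk_eq_zero]
  constructor <;> nlinarith

lemma abs_dirC {γ : ℝ → ℝ × ℝ} {s : ℝ} (h : deriv γ s ≠ 0) :
    ‖dirC γ s‖ = 1 := by
  have hv := vC_ne_zero h
  have : ‖vC γ s‖ ≠ 0 := by simpa using hv
  rw [dirC, norm_div, Complex.norm_real, norm_norm, div_self this]

/-- A continuous angle lift on `[0, 2π]` with total increment `r`. -/
def GoodLift (γ : ℝ → ℝ × ℝ) (r : ℝ) : Prop :=
  ∃ θ : ℝ → ℝ, ContinuousOn θ (Icc 0 (2 * π)) ∧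
    (∀ s ∈ Icc 0 (2 * π), Complex.exp ((θ s : ℂ) * Complex.I) = dirC γ s) ∧
    θ (2 * π) - θ 0 = r

lemma dirC_continuous {γ : ℝ → ℝ × ℝ} (h : IsRegularClosedCurve γ) :
    Continuous (dirC γ) := by
  have hd : Continuous (deriv γ) := h.1.continuous_deriv le_rfl
  have hv : Continuous (vC γ) := by
    apply Continuous.add
    · exact Complex.continuous_ofReal.comp (continuous_fst.comp hd)
    · exact (Complex.continuous_ofReal.comp (continuous_snd.comp hd)).mul continuous_const
  apply hv.div (Complex.continuous_ofReal.comp (continuous_norm.comp hv))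
  intro s
  have := vC_ne_zero (h.2.2 s)
  simpa using this

lemma dirC_periodic {γ : ℝ → ℝ × ℝ} (h : IsRegularClosedCurve γ) (s : ℝ) :
    dirC γ (s + 2 * π) = dirC γ s := by
  have hd : deriv γ (s + 2 * π) = deriv γ s := by
    have : (fun x => γ (x + 2 * π)) = γ := funext fun x => h.2.1 x
    calc deriv γ (s + 2 * π) = deriv (fun x => γ (x + 2 * π)) s := (deriv_comp_add_const _ _ _).symm
    _ = deriv γ s := by rw [this]
  simp [dirC, vC, hd]

/-- From `HasRotationNumber`-style data to `GoodLift`. -/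
lemma goodLift_of_lift {γ : ℝ → ℝ × ℝ} (h : IsRegularClosedCurve γ) {θ : ℝ → ℝ} {r : ℝ}
    (hc : Continuous θ)
    (hlift : ∀ s, deriv γ s = ‖deriv γ s‖ • (Real.cos (θ s), Real.sin (θ s)))
    (hr : θ (2 * π) - θ 0 = r) : GoodLift γ r := by
  refine ⟨θ, hc.continuousOn, fun s _ => ?_, hr⟩
  have hv : vC γ s = (‖deriv γ s‖ : ℂ) * Complex.exp ((θ s : ℂ) * Complex.I) := by
    have h1 : (deriv γ s).1 = ‖deriv γ s‖ * Real.cos (θ s) := by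
      conv_lhs => rw [hlift s]
      simp [smul_eq_mul]
    have h2 : (deriv γ s).2 = ‖deriv γ s‖ * Real.sin (θ s) := by
      conv_lhs => rw [hlift s]
      simp [smul_eq_mul]
    rw [Complex.exp_mul_I]
    simp only [vC, h1, h2]
    push_cast
    ring
  have habs : ‖vC γ s‖ = ‖deriv γ s‖ := by
    rw [hv]
    simp [Complex.norm_exp, Complex.norm_real, _root_.abs_of_nonneg (norm_nonneg _)]
  have hne : ‖deriv γ s‖ ≠ 0 := norm_ne_zero_iff.mpr (h.2.2 s)
  rw [dirC, habs, hv]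
  exact (mul_div_cancel_left₀ _ (by exact_mod_cast hne)).symm

/-- Uniqueness of the increment. -/
lemma goodLift_unique {γ : ℝ → ℝ × ℝ} {r r' : ℝ}
    (h : GoodLift γ r) (h' : GoodLift γ r') : r = r' := by
  obtain ⟨θ, hθc, hθ, hθr⟩ := h
  obtain ⟨φ, hφc, hφ, hφr⟩ := h'
  have hpi : (0:ℝ) ≤ 2 * π := by positivity
  -- g is integer-valued and continuous on Icc
  set g : ℝ → ℝ := fun s => (θ s - φ s) / (2 * π) with hg
  have hgc : ContinuousOn g (Icc 0 (2 * π)) := ((hθc.sub hφc).div_const _)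
  have hint : ∀ s ∈ Icc 0 (2 * π), ∃ k : ℤ, g s = k := by
    intro s hs
    have hd0 : dirC γ s ≠ 0 := by
      rw [← hθ s hs]; exact Complex.exp_ne_zero _
    have he : Complex.exp ((θ s : ℂ) * Complex.I - (φ s : ℂ) * Complex.I) = 1 := by
      rw [Complex.exp_sub, hθ s hs, hφ s hs, div_self hd0]
    rw [Complex.exp_eq_one_iff] at he
    obtain ⟨k, hk⟩ := he
    refine ⟨k, ?_⟩
    have : ((θ s - φ s : ℝ) : ℂ) * Complex.I = (k : ℂ) * (2 * π) * Complex.I := by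
      push_cast at hk ⊢; linear_combination hk
    have h2 : ((θ s - φ s : ℝ) : ℂ) = (k : ℂ) * (2 * π) := by
      exact mul_right_cancel₀ Complex.I_ne_zero this
    have h3 : θ s - φ s = (k : ℝ) * (2 * π) := by exact_mod_cast h2
    rw [hg]
    field_simp [h3, pi_ne_zero]
    linarith [h3]
  -- integer-valued continuous on connected set: endpoints agree
  have h0m : (0:ℝ) ∈ Icc 0 (2 * π) := ⟨le_refl _, hpi⟩
  have h2m : (2 * π) ∈ Icc (0:ℝ) (2 * π) := ⟨hpi, le_refl _⟩
  obtain ⟨k0, hk0⟩ := hint 0 h0m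
  obtain ⟨k1, hk1⟩ := hint _ h2m
  have hkeq : k0 = k1 := by
    by_contra hne
    rcases lt_or_gt_of_ne hne with hlt | hlt
    · have : ((k0 : ℝ) + 1/2) ∈ Icc (g 0) (g (2*π)) := by
        rw [hk0, hk1]
        constructor
        · linarith
        · have : (k0 : ℝ) + 1 ≤ k1 := by exact_mod_cast hlt
          linarith
      obtain ⟨c, hc, hgc'⟩ := intermediate_value_Icc hpi hgc this
      obtain ⟨k, hk⟩ := hint c hc
      rw [hk] at hgc'
      have : (2*k : ℝ) = 2*k0 + 1 := by push_cast; linarith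
      have : (2*k : ℤ) = 2*k0 + 1 := by exact_mod_cast this
      omega
    · have : ((k1 : ℝ) + 1/2) ∈ Icc (g (2*π)) (g 0) := by
        rw [hk0, hk1]
        constructor
        · linarith
        · have : (k1 : ℝ) + 1 ≤ k0 := by exact_mod_cast hlt
          linarith
      obtain ⟨c, hc, hgc'⟩ := intermediate_value_Icc' hpi hgc this
      obtain ⟨k, hk⟩ := hint c hc
      rw [hk] at hgc'
      have : (2*k : ℝ) = 2*k1 + 1 := by push_cast; linarith
      have : (2*k : ℤ) = 2*k1 + 1 := by exact_mod_cast this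
      omega
  have heq : g (2*π) = g 0 := by rw [hk0, hk1, hkeq]
  have hdiff : θ (2*π) - φ (2*π) = θ 0 - φ 0 := by
    have hne : (2*π) ≠ 0 := by positivity
    have h2 : (θ (2*π) - φ (2*π)) / (2*π) = (θ 0 - φ 0) / (2*π) := heq
    field_simp at h2
    linarith
  linarith [hθr, hφr, hdiff]

end RotAux

namespace RotAux
open Complex Set

lemma mem_slitPlane_of_abs_one {z : ℂ} (h1 : ‖z‖ = 1) (hne : z ≠ -1) :
    z ∈ Complex.slitPlane := by
  rw [Complex.mem_slitPlane_iff]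
  by_contra hc
  push_neg at hc
  obtain ⟨hre, him⟩ := hc
  apply hne
  have hz : z = (z.re : ℂ) := by
    apply Complex.ext <;> simp [him]
  rw [hz] at h1 ⊢
  rw [Complex.norm_real, Real.norm_eq_abs] at h1
  have : z.re = -1 := by cases abs_cases z.re <;> linarith
  rw [this]; norm_num

lemma goodLift_transfer {γ γ' : ℝ → ℝ × ℝ} {r : ℝ}
    (hγ : IsRegularClosedCurve γ) (hγ' : IsRegularClosedCurve γ')
    (hclose : ∀ s ∈ Icc 0 (2*π), ‖dirC γ' s - dirC γ s‖ < 2)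
    (h : GoodLift γ r) : GoodLift γ' r := by
  obtain ⟨θ, hθc, hθ, hθr⟩ := h
  set w : ℝ → ℂ := fun s => dirC γ' s * (starRingEnd ℂ) (dirC γ s) with hw
  have habsw : ∀ s, ‖w s‖ = 1 := fun s => by
    simp [hw, abs_dirC (hγ'.2.2 s), abs_dirC (hγ.2.2 s)]
  have hconj1 : ∀ s, (starRingEnd ℂ) (dirC γ s) * dirC γ s = 1 := by
    intro s
    rw [mul_comm, Complex.mul_conj, Complex.normSq_eq_norm_sq, abs_dirC (hγ.2.2 s)]
    norm_num
  have hwslit : ∀ s ∈ Icc 0 (2*π), w s ∈ Complex.slitPlane := by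
    intro s hs
    apply mem_slitPlane_of_abs_one (habsw s)
    intro hm1
    have hdir : dirC γ' s = - dirC γ s := by
      have h2 : w s * dirC γ s = - dirC γ s := by rw [hm1]; ring
      calc dirC γ' s = dirC γ' s * ((starRingEnd ℂ) (dirC γ s) * dirC γ s) := by
            rw [hconj1 s, mul_one]
        _ = w s * dirC γ s := by rw [hw]; ring
        _ = - dirC γ s := h2
    have hcl := hclose s hs
    rw [hdir] at hcl
    have : ‖-dirC γ s - dirC γ s‖ = 2 := by
      have : -dirC γ s - dirC γ s = (-2 : ℂ) * dirC γ s := by ring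
      rw [this, norm_mul, abs_dirC (hγ.2.2 s)]
      simp
    linarith
  have hwc : Continuous w :=
    (dirC_continuous hγ').mul (Complex.continuous_conj.comp (dirC_continuous hγ))
  set φ : ℝ → ℝ := fun s => Complex.arg (w s) with hφ
  have hφc : ContinuousOn φ (Icc 0 (2*π)) := fun s hs =>
    (Complex.continuousAt_arg (hwslit s hs)).comp_continuousWithinAt
      hwc.continuousWithinAt
  have hexpw : ∀ s, Complex.exp ((φ s : ℂ) * Complex.I) = w s := by
    intro s
    have := Complex.norm_mul_exp_arg_mul_I (w s)
    rwa [habsw s, Complex.ofReal_one, one_mul] at this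
  refine ⟨fun s => θ s + φ s, hθc.add hφc, fun s hs => ?_, ?_⟩
  · have : ((θ s + φ s : ℝ) : ℂ) * Complex.I = (θ s : ℂ) * Complex.I + (φ s : ℂ) * Complex.I := by
      push_cast; ring
    rw [this, Complex.exp_add, hθ s hs, hexpw s]
    calc dirC γ s * w s = dirC γ' s * ((starRingEnd ℂ) (dirC γ s) * dirC γ s) := by
          rw [hw]; ring
      _ = dirC γ' s := by rw [hconj1 s, mul_one]
  · have hweq : w (2*π) = w 0 := by
      have h1 : dirC γ (2*π) = dirC γ 0 := by
        have := dirC_periodic hγ 0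
        simpa using this
      have h2 : dirC γ' (2*π) = dirC γ' 0 := by
        have := dirC_periodic hγ' 0
        simpa using this
      rw [hw]; simp only [h1, h2]
    have hphe : φ (2*π) = φ 0 := by rw [hφ]; simp only [hweq]
    show θ (2*π) + φ (2*π) - (θ 0 + φ 0) = r
    rw [hphe]; linarith [hθr]

end RotAux


/-- The rotation number is invariant under regular homotopy. -/
theorem rotationNumber_invariant_of_regularlyHomotopic
    (γ₀ γ₁ : ℝ → ℝ × ℝ) (n₀ n₁ : ℤ)
    (h₀ : IsRegularClosedCurve γ₀) (h₁ : IsRegularClosedCurve γ₁)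
    (hn₀ : HasRotationNumber γ₀ n₀) (hn₁ : HasRotationNumber γ₁ n₁)
    (h : RegularlyHomotopic γ₀ γ₁) :
    n₀ = n₁ := by
  
  obtain ⟨Γ, ⟨hreg, _, hD⟩, hΓ0, hΓ1⟩ := h
  obtain ⟨θ₀, hθ₀c, hθ₀l, hθ₀r⟩ := hn₀
  have GL0 : RotAux.GoodLift γ₀ (2 * π * (n₀:ℝ)) := RotAux.goodLift_of_lift h₀ hθ₀c hθ₀l hθ₀r
  obtain ⟨θ₁, hθ₁c, hθ₁l, hθ₁r⟩ := hn₁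
  have GL1 : RotAux.GoodLift γ₁ (2 * π * (n₁:ℝ)) := RotAux.goodLift_of_lift h₁ hθ₁c hθ₁l hθ₁r
  set K : Set (ℝ × ℝ) := Set.Icc 0 (2*π) ×ˢ Set.Icc (0:ℝ) 1 with hK
  have hKsub : K ⊆ Set.univ ×ˢ Set.Icc (0:ℝ) 1 :=
    Set.prod_mono (Set.subset_univ _) subset_rfl
  have hKc : IsCompact K := isCompact_Icc.prod isCompact_Icc
  set P : ℝ × ℝ → ℂ := fun p => RotAux.dirC (Γ p.2) p.1 with hP
  have hne : ∀ p ∈ K, deriv (Γ p.2) p.1 ≠ 0 := fun p hp => (hreg p.2 hp.2).2.2 p.1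
  have hPc : ContinuousOn P K := by
    have hDK : ContinuousOn (fun p : ℝ×ℝ => deriv (Γ p.2) p.1) K := hD.mono hKsub
    have hvK : ContinuousOn (fun p : ℝ×ℝ => RotAux.vC (Γ p.2) p.1) K := by
      unfold RotAux.vC
      exact (Complex.continuous_ofReal.comp_continuousOn
          (continuous_fst.comp_continuousOn hDK)).add
        ((Complex.continuous_ofReal.comp_continuousOn
          (continuous_snd.comp_continuousOn hDK)).mul continuousOn_const)
    have habs : ContinuousOn (fun p : ℝ×ℝ =>
        ((‖RotAux.vC (Γ p.2) p.1‖ : ℝ) : ℂ)) K :=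
      Complex.continuous_ofReal.comp_continuousOn
        (continuous_norm.comp_continuousOn hvK)
    have hz : ∀ p ∈ K, ((‖RotAux.vC (Γ p.2) p.1‖ : ℝ) : ℂ) ≠ 0 := by
      intro p hp
      have := RotAux.vC_ne_zero (hne p hp)
      simpa using this
    exact ContinuousOn.div hvK habs hz
  have hu := hKc.uniformContinuousOn_of_continuous hPc
  obtain ⟨δ, hδ, hδ2⟩ := Metric.uniformContinuousOn_iff.mp hu 2 (by norm_num)
  obtain ⟨N, hN⟩ := exists_nat_gt (1/δ)
  have hNpos : (0:ℝ) < N := lt_trans (by positivity) hN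
  have hN1 : 1/(N:ℝ) < δ := by
    rw [div_lt_iff₀ hNpos]
    calc (1:ℝ) = δ * (1/δ) := by field_simp
    _ < δ * N := by
      apply mul_lt_mul_of_pos_left _ hδ
      rw [div_lt_iff₀ hδ] at hN
      rw [div_lt_iff₀ hδ]
      linarith
  have hmem : ∀ k : ℕ, k ≤ N → ((k:ℝ)/N) ∈ Set.Icc (0:ℝ) 1 := by
    intro k hk
    constructor
    · positivity
    · rw [div_le_one hNpos]; exact_mod_cast hk
  have key : ∀ k : ℕ, k ≤ N → RotAux.GoodLift (Γ ((k:ℝ)/N)) (2*π*(n₀:ℝ)) := by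
    intro k
    induction k with
    | zero =>
      intro _
      have h0 : ((0:ℕ):ℝ)/N = 0 := by simp
      rw [h0, hΓ0]; exact GL0
    | succ k ih =>
      intro hk
      have prev := ih (Nat.le_of_succ_le hk)
      have hm1 : ((k:ℝ)/N) ∈ Set.Icc (0:ℝ) 1 := hmem k (Nat.le_of_succ_le hk)
      have hm2 : (((k+1:ℕ):ℝ)/N) ∈ Set.Icc (0:ℝ) 1 := hmem (k+1) hk
      apply RotAux.goodLift_transfer (hreg _ hm1) (hreg _ hm2) _ prev
      intro s hs
      have hp1 : (s, (k:ℝ)/N) ∈ K := ⟨hs, hm1⟩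
      have hp2 : (s, ((k+1:ℕ):ℝ)/N) ∈ K := ⟨hs, hm2⟩
      have hdist : dist ((s, ((k+1:ℕ):ℝ)/N)) ((s, (k:ℝ)/N)) < δ := by
        rw [Prod.dist_eq]
        simp only [dist_self]
        have hdd : (((k+1:ℕ):ℝ)/N) - ((k:ℝ)/N) = 1/N := by
          push_cast
          field_simp
          ring
        have hde : dist (((k+1:ℕ):ℝ)/N) ((k:ℝ)/N) = 1/N := by
          rw [Real.dist_eq, hdd, abs_of_pos (by positivity)]
        rw [hde]
        exact max_lt hδ hN1
      have hlt := hδ2 _ hp2 _ hp1 hdist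
      have : dist (P (s, ((k+1:ℕ):ℝ)/N)) (P (s, (k:ℝ)/N))
          = ‖RotAux.dirC (Γ (((k+1:ℕ):ℝ)/N)) s - RotAux.dirC (Γ ((k:ℝ)/N)) s‖ := by
        rw [hP, Complex.dist_eq]
      rw [this] at hlt
      exact hlt
  have keyN := key N le_rfl
  have hNN : ((N:ℝ)/N) = 1 := div_self (ne_of_gt hNpos)
  rw [hNN, hΓ1] at keyN
  have hfin : 2*π*(n₀:ℝ) = 2*π*(n₁:ℝ) := RotAux.goodLift_unique keyN GL1
  have hcast : (n₀:ℝ) = (n₁:ℝ) := by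
    have h2π : (2*π : ℝ) ≠ 0 := by positivity
    exact mul_left_cancel₀ h2π hfin
  exact_mod_cast hcast
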